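/- arXiv:1708.07492 — 3 statements merged into one kernel-verified Lean document; each statement's English description precedes it below -/
import Mathlib

section
/- Let n ≥ 1, let I be a nonempty subset of {1,…,n}, let r ∈ ℝⁿ satisfy r_j > 0 for j ∈ I and r_j = 0 for j ∉ I, and let λ ∈ ℤⁿ satisfy λ_j = 0 for all j ∈ I. Let (α_k) be a sequence of nonzero real numbers and (λ^k) a sequence in ℤⁿ. Then the following are equivalent. (A) There exist sequences (θ^k) in ℝⁿ and (x^k) in [0,∞)ⁿ such that, as k → ∞: α_k → 0; for each j ∈ I, α_k·exp(i·θ_j^k)·x_j^k → r_j in ℂ; for each j ∉ I, α_k·exp(i·θ_j^k)·x_j^k → 0 in ℂ; for each j ∈ I, λ_j^k − (α_k/2)·(x_j^k)² → 0; and for each j ∉ I, λ_j^k − (α_k/2)·(x_j^k)² → λ_j. (B) α_k → 0; for each j ∈ I, α_k·λ_j^k → r_j²/2; and for each j ∉ I, α_k·λ_j^k → 0 and α_k·(λ_j^k − λ_j) ≥ 0 for all sufficiently large k. -/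
open Filter Topology

private lemma abs_mul_sqrt_div {a c : ℝ} (ha : a ≠ 0) (h : 0 ≤ a * c) :
    |a| * Real.sqrt (2 * c / a) = Real.sqrt (2 * (a * c)) := by
  have h1 : |a| = Real.sqrt (a ^ 2) := by
    rw [Real.sqrt_sq_eq_abs]
  rw [h1, ← Real.sqrt_mul (sq_nonneg a)]
  congr 1
  field_simp

private lemma div_nonneg_of_mul_nonneg {a c : ℝ} (ha : a ≠ 0) (h : 0 ≤ a * c) :
    0 ≤ 2 * c / a := by
  have h2 : 2 * c / a = 2 * (a * c) / a ^ 2 := by field_simp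
  rw [h2]
  positivity

/-- Theorem 3.1(1)(b): convergence criterion for a sequence of generic admissible coadjoint
orbits `O_{(λ^k, α_k)}` of the Heisenberg motion group `G_n = 𝕋ⁿ ⋉ ℍ_n` to converge to the
orbit `O_{λ,r}`. -/
theorem orbit_convergence_criterion
    (n : ℕ) (hn : 1 ≤ n) (I : Finset (Fin n)) (hI : I.Nonempty)
    (r : Fin n → ℝ) (hrI : ∀ j ∈ I, 0 < r j) (hrI' : ∀ j ∉ I, r j = 0)
    (Λ : Fin n → ℤ) (hΛ : ∀ j ∈ I, Λ j = 0)
    (α : ℕ → ℝ) (hα : ∀ k, α k ≠ 0) (Λk : ℕ → Fin n → ℤ) :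
    (∃ θ : ℕ → Fin n → ℝ, ∃ x : ℕ → Fin n → ℝ,
      (∀ k j, 0 ≤ x k j) ∧
      Tendsto α atTop (𝓝 0) ∧
      (∀ j ∈ I, Tendsto (fun k => (α k : ℂ) * Complex.exp (Complex.I * (θ k j : ℂ)) * (x k j : ℂ))
        atTop (𝓝 ((r j : ℂ)))) ∧
      (∀ j ∉ I, Tendsto (fun k => (α k : ℂ) * Complex.exp (Complex.I * (θ k j : ℂ)) * (x k j : ℂ))
        atTop (𝓝 0)) ∧
      (∀ j ∈ I, Tendsto (fun k => ((Λk k j : ℝ)) - α k / 2 * (x k j) ^ 2) atTop (𝓝 0)) ∧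
      (∀ j ∉ I, Tendsto (fun k => ((Λk k j : ℝ)) - α k / 2 * (x k j) ^ 2) atTop
        (𝓝 ((Λ j : ℝ)))))
    ↔
    (Tendsto α atTop (𝓝 0) ∧
      (∀ j ∈ I, Tendsto (fun k => α k * ((Λk k j : ℝ))) atTop (𝓝 (r j ^ 2 / 2))) ∧
      (∀ j ∉ I, Tendsto (fun k => α k * ((Λk k j : ℝ))) atTop (𝓝 0) ∧
        ∀ᶠ k in atTop, 0 ≤ α k * (((Λk k j - Λ j : ℤ) : ℝ)))) := by
  constructor
  · rintro ⟨θ, x, hx0, hα0, hAI, hAO, hBI, hBO⟩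
    -- abs of the complex quantity is |α| * x
    have habs : ∀ k j, ‖((α k : ℂ) * Complex.exp (Complex.I * (θ k j : ℂ))
        * (x k j : ℂ))‖ = |α k| * x k j := by
      intro k j
      rw [norm_mul, norm_mul, mul_comm Complex.I, Complex.norm_exp_ofReal_mul_I,
        Complex.norm_real, Complex.norm_real, Real.norm_eq_abs, Real.norm_eq_abs, abs_of_nonneg (hx0 k j), mul_one]
    have hyI : ∀ j ∈ I, Tendsto (fun k => |α k| * x k j) atTop (𝓝 (r j)) := by
      intro j hj
      have := (continuous_norm.tendsto _).comp (hAI j hj)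
      simp only [Function.comp_def, habs, Complex.norm_real, Real.norm_eq_abs,
        abs_of_pos (hrI j hj)] at this
      exact this
    have hyO : ∀ j ∉ I, Tendsto (fun k => |α k| * x k j) atTop (𝓝 0) := by
      intro j hj
      have := (continuous_norm.tendsto _).comp (hAO j hj)
      simp only [Function.comp_def, habs, norm_zero] at this
      exact this
    refine ⟨hα0, ?_, ?_⟩
    · intro j hj
      have key : Tendsto (fun k => α k * ((Λk k j : ℝ) - α k / 2 * (x k j) ^ 2)
          + (|α k| * x k j) ^ 2 / 2) atTop (𝓝 (0 * 0 + r j ^ 2 / 2)) := by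
        exact (hα0.mul (hBI j hj)).add (((hyI j hj).pow 2).div_const 2)
      rw [zero_mul, zero_add] at key
      refine key.congr fun k => ?_
      have : (|α k| * x k j) ^ 2 = α k ^ 2 * x k j ^ 2 := by
        rw [mul_pow, sq_abs]
      rw [this]; ring
    · intro j hj
      constructor
      · have key : Tendsto (fun k => α k * ((Λk k j : ℝ) - α k / 2 * (x k j) ^ 2)
            + (|α k| * x k j) ^ 2 / 2) atTop (𝓝 (0 * (Λ j : ℝ) + 0 ^ 2 / 2)) := by
          exact (hα0.mul (hBO j hj)).add (((hyO j hj).pow 2).div_const 2)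
        rw [zero_mul, zero_add] at key
        norm_num at key
        refine key.congr fun k => ?_
        have : (|α k| * x k j) ^ 2 = α k ^ 2 * x k j ^ 2 := by
          rw [mul_pow, sq_abs]
        rw [this]; ring
      · have hε : Tendsto (fun k => ((Λk k j : ℝ) - α k / 2 * (x k j) ^ 2) - (Λ j : ℝ))
            atTop (𝓝 0) := by
          simpa using (hBO j hj).sub_const (Λ j : ℝ)
        have h2 := (Metric.tendsto_nhds.mp hε) (1/2) (by norm_num)
        rw [eventually_atTop] at h2 ⊢
        obtain ⟨N, hN⟩ := h2
        refine ⟨N, fun k hk => ?_⟩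
        have hk' := hN k hk
        rw [Real.dist_eq, sub_zero] at hk'
        have hsq : (0:ℝ) ≤ x k j ^ 2 := sq_nonneg _
        have hcast : ((Λk k j - Λ j : ℤ) : ℝ) = (Λk k j : ℝ) - (Λ j : ℝ) := by push_cast; ring
        rw [hcast]
        rcases lt_trichotomy (Λk k j - Λ j) 0 with h | h | h
        · have hm : ((Λk k j : ℝ) - (Λ j : ℝ)) ≤ -1 := by
            have : (Λk k j - Λ j : ℤ) ≤ -1 := by omega
            calc (Λk k j : ℝ) - (Λ j : ℝ) = ((Λk k j - Λ j : ℤ) : ℝ) := by push_cast; ring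
              _ ≤ -1 := by exact_mod_cast this
          have habs' : |((Λk k j : ℝ) - α k / 2 * (x k j) ^ 2) - (Λ j : ℝ)| < 1/2 := hk'
          rw [abs_lt] at habs'
          have hαneg : α k < 0 := by nlinarith [habs'.1, habs'.2]
          nlinarith
        · rw [show (Λk k j : ℝ) - (Λ j : ℝ) = ((Λk k j - Λ j : ℤ) : ℝ) by push_cast; ring,
            h]
          simp
        · have hm : (1:ℝ) ≤ (Λk k j : ℝ) - (Λ j : ℝ) := by
            have : (1:ℤ) ≤ Λk k j - Λ j := h
            calc (1:ℝ) ≤ ((Λk k j - Λ j : ℤ) : ℝ) := by exact_mod_cast this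
              _ = (Λk k j : ℝ) - (Λ j : ℝ) := by push_cast; ring
          have habs' : |((Λk k j : ℝ) - α k / 2 * (x k j) ^ 2) - (Λ j : ℝ)| < 1/2 := hk'
          rw [abs_lt] at habs'
          have hαpos : 0 < α k := by nlinarith [habs'.1, habs'.2]
          nlinarith
  · rintro ⟨hα0, hBI, hBO⟩
    refine ⟨fun k _ => if 0 < α k then 0 else Real.pi,
      fun k j => if j ∈ I then Real.sqrt (2 * (Λk k j : ℝ) / α k)
        else Real.sqrt (2 * ((Λk k j : ℝ) - (Λ j : ℝ)) / α k),
      fun k j => by dsimp only; split <;> exact Real.sqrt_nonneg _,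
      hα0, ?_, ?_, ?_, ?_⟩
    · -- complex convergence, j ∈ I
      intro j hj
      have hpos : ∀ᶠ k in atTop, 0 < α k * (Λk k j : ℝ) :=
        (hBI j hj).eventually (eventually_gt_nhds (by have := hrI j hj; positivity : (0:ℝ) < r j ^ 2 / 2))
      have hreal : Tendsto (fun k => |α k| * Real.sqrt (2 * (Λk k j : ℝ) / α k))
          atTop (𝓝 (r j)) := by
        have hlim : Tendsto (fun k => Real.sqrt (2 * (α k * (Λk k j : ℝ))))
            atTop (𝓝 (r j)) := by
          have := (Real.continuous_sqrt.tendsto _).comp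
            ((tendsto_const_nhds (x := (2:ℝ))).mul (hBI j hj))
          simp only [Function.comp_def] at this
          convert this using 2
          rw [show (2:ℝ) * (r j ^ 2 / 2) = r j ^ 2 by ring, Real.sqrt_sq (hrI j hj).le]
        refine Tendsto.congr' ?_ hlim
        filter_upwards [hpos] with k hk
        rw [abs_mul_sqrt_div (hα k) hk.le]
      have : Tendsto (fun k => ((|α k| * Real.sqrt (2 * (Λk k j : ℝ) / α k) : ℝ) : ℂ))
          atTop (𝓝 ((r j : ℝ) : ℂ)) := (Complex.continuous_ofReal.tendsto _).comp hreal
      refine this.congr fun k => ?_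
      push_cast
      rw [if_pos hj]
      by_cases h : 0 < α k
      · rw [if_pos h]
        push_cast
        rw [mul_zero, Complex.exp_zero, abs_of_pos h]
        ring
      · have hlt : α k < 0 := lt_of_le_of_ne (not_lt.mp h) (hα k)
        rw [if_neg h, mul_comm Complex.I, Complex.exp_pi_mul_I, abs_of_neg hlt]
        push_cast
        ring
    · -- complex convergence, j ∉ I
      intro j hj
      have hpos : ∀ᶠ k in atTop, 0 ≤ α k * ((Λk k j : ℝ) - (Λ j : ℝ)) := by
        filter_upwards [(hBO j hj).2] with k hk
        push_cast at hk
        linarith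
      have hreal : Tendsto (fun k => |α k| * Real.sqrt (2 * ((Λk k j : ℝ) - (Λ j : ℝ)) / α k))
          atTop (𝓝 0) := by
        have hlim : Tendsto (fun k => Real.sqrt (2 * (α k * ((Λk k j : ℝ) - (Λ j : ℝ)))))
            atTop (𝓝 0) := by
          have hin : Tendsto (fun k => 2 * (α k * ((Λk k j : ℝ) - (Λ j : ℝ))))
              atTop (𝓝 0) := by
            have : Tendsto (fun k => 2 * (α k * (Λk k j : ℝ) - α k * (Λ j : ℝ)))
                atTop (𝓝 (2 * (0 - 0 * (Λ j : ℝ)))) :=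
              (tendsto_const_nhds (x := (2:ℝ))).mul
                (((hBO j hj).1).sub (hα0.mul_const (Λ j : ℝ)))
            simp only [zero_mul, sub_zero, mul_zero] at this
            refine this.congr fun k => by ring
          have := (Real.continuous_sqrt.tendsto _).comp hin
          simpa [Function.comp_def] using this
        refine Tendsto.congr' ?_ hlim
        filter_upwards [hpos] with k hk
        rw [abs_mul_sqrt_div (hα k) hk]
      have : Tendsto (fun k => ((|α k| * Real.sqrt (2 * ((Λk k j : ℝ) - (Λ j : ℝ)) / α k) : ℝ) : ℂ))
          atTop (𝓝 ((0 : ℝ) : ℂ)) := (Complex.continuous_ofReal.tendsto _).comp hreal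
      rw [Complex.ofReal_zero] at this
      refine this.congr fun k => ?_
      push_cast
      rw [if_neg hj]
      by_cases h : 0 < α k
      · rw [if_pos h]
        push_cast
        rw [mul_zero, Complex.exp_zero, abs_of_pos h]
        ring
      · have hlt : α k < 0 := lt_of_le_of_ne (not_lt.mp h) (hα k)
        rw [if_neg h, mul_comm Complex.I, Complex.exp_pi_mul_I, abs_of_neg hlt]
        push_cast
        ring
    · -- real convergence, j ∈ I
      intro j hj
      have hpos : ∀ᶠ k in atTop, 0 < α k * (Λk k j : ℝ) :=
        (hBI j hj).eventually (eventually_gt_nhds (by have := hrI j hj; positivity : (0:ℝ) < r j ^ 2 / 2))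
      refine Tendsto.congr' ?_ (tendsto_const_nhds (x := (0:ℝ)))
      filter_upwards [hpos] with k hk
      simp only [if_pos hj]
      rw [Real.sq_sqrt (div_nonneg_of_mul_nonneg (hα k) hk.le)]
      field_simp [hα k]; ring
    · -- real convergence, j ∉ I
      intro j hj
      have hpos : ∀ᶠ k in atTop, 0 ≤ α k * ((Λk k j : ℝ) - (Λ j : ℝ)) := by
        filter_upwards [(hBO j hj).2] with k hk
        push_cast at hk
        linarith
      refine Tendsto.congr' ?_ (tendsto_const_nhds (x := ((Λ j : ℝ))))
      filter_upwards [hpos] with k hk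
      simp only [if_neg hj]
      rw [Real.sq_sqrt (div_nonneg_of_mul_nonneg (hα k) hk)]
      field_simp [hα k]; ring
end

section
/- Let r > 0 and j, l ∈ ℤ. Let G : ℝ × ℂ → ℂ be continuous, 2π-periodic in its first variable, and suppose there is a compact set K ⊆ ℂ such that G(θ,z) = 0 for all θ whenever z ∉ K. Define Φ_j : ℂ → ℂ by Φ_j(z) := (1/(2π)) ∫₀^{2π} exp(−i·j·θ)·G(θ,z) dθ, and define Ĝ : ℝ × ℂ → ℂ by Ĝ(ψ,w) := ∫_ℂ exp(−i·Re(w·conj z))·G(ψ,z) dz. Then i^{l−j} · B[r,Φ_j](j,l) = (1/(2π)²) · ∫₀^{2π} ∫₀^{2π} exp(i·j·θ)·exp(−i·l·φ)·Ĝ(φ−θ, r·exp(i·φ)) dφ dθ. -/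
open MeasureTheory


/-- The Bessel-type matrix coefficient `B[r,h₀](j,l)`. -/
noncomputable def Bcoef (r : ℝ) (h₀ : ℂ → ℂ) (j l : ℤ) : ℂ :=
  ∑' q : ℕ,
    if 0 ≤ (q : ℤ) + l - j then
      (-1 : ℂ) ^ ((q : ℤ) + l - j).toNat *
        (((r / 2) ^ (2 * (q : ℤ) + l - j).toNat /
          ((Nat.factorial q) * (Nat.factorial ((q : ℤ) + l - j).toNat)) : ℝ) : ℂ) *
        ∫ z : ℂ, z ^ q * (starRingEnd ℂ z) ^ ((q : ℤ) + l - j).toNat * h₀ z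
    else 0

/-- The `j`-th Fourier coefficient in the first variable. -/
noncomputable def PhiCoef (G : ℝ → ℂ → ℂ) (j : ℤ) (z : ℂ) : ℂ :=
  (1 / (2 * Real.pi)) *
    ∫ θ in (0 : ℝ)..(2 * Real.pi), Complex.exp (-Complex.I * (j : ℂ) * (θ : ℂ)) * G θ z

/-- The partial Fourier transform `Ĝ(ψ,w) = ∫_ℂ exp(−i Re(w conj z)) G(ψ,z) dz`. -/
noncomputable def Ghat (G : ℝ → ℂ → ℂ) (ψ : ℝ) (w : ℂ) : ℂ :=
  ∫ z : ℂ, Complex.exp (-Complex.I * ((w * starRingEnd ℂ z).re : ℂ)) * G ψ z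

noncomputable section AuxBessel

private lemma exp_tsum (x : ℂ) : Complex.exp x = ∑' n : ℕ, x ^ n / n.factorial := by
  rw [Complex.exp_eq_exp_ℂ, NormedSpace.exp_eq_tsum_div]

private lemma norm_summable_pow (x : ℂ) :
    Summable fun n : ℕ => ‖x ^ n / (n.factorial : ℂ)‖ := by
  have h := Real.summable_pow_div_factorial ‖x‖
  refine h.congr fun n => ?_
  simp [norm_div, norm_pow]

private lemma norm_exp_eq_one {x : ℂ} (hx : x.re = 0) : ‖Complex.exp x‖ = 1 := by
  rw [Complex.norm_exp, hx, Real.exp_zero]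

private lemma circleInt (k : ℤ) :
    (∫ φ in (0:ℝ)..(2*Real.pi), Complex.exp ((Complex.I * (k:ℂ)) * φ)) =
      if k = 0 then ((2*Real.pi : ℝ) : ℂ) else 0 := by
  rcases eq_or_ne k 0 with hk | hk
  · subst hk
    simp
  · rw [if_neg hk, integral_exp_mul_complex
      (mul_ne_zero Complex.I_ne_zero (by exact_mod_cast hk))]
    have h1 : (Complex.I * (k:ℂ)) * ((2*Real.pi : ℝ) : ℂ) = (k:ℂ) * (2*(Real.pi:ℂ)*Complex.I) := by
      push_cast; ring
    rw [h1, Complex.exp_int_mul_two_pi_mul_I]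
    simp

/-- the summand of the Bessel expansion of the angular kernel -/
private def gq (r : ℝ) (j l : ℤ) (z : ℂ) (q : ℕ) : ℂ :=
  if 0 ≤ (q:ℤ) + l - j then
    (-Complex.I) ^ (((q:ℤ) + l - j).toNat + q) *
      (((r/2) ^ (((q:ℤ)+l-j).toNat + q) /
        (((((q:ℤ)+l-j).toNat.factorial : ℝ)) * (q.factorial : ℝ)) : ℝ) : ℂ) *
      ((starRingEnd ℂ) z ^ ((q:ℤ)+l-j).toNat * z ^ q)
  else 0

/-- the plane-wave kernel -/
private def Ebess (r : ℝ) (φ : ℝ) (z : ℂ) : ℂ :=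
  Complex.exp (-Complex.I *
    ((((r : ℂ) * Complex.exp (Complex.I * (φ:ℂ)) * (starRingEnd ℂ) z).re : ℝ) : ℂ))

@[fun_prop]
private lemma Ebess_cont' {X : Type*} [TopologicalSpace X] (r : ℝ) (f : X → ℝ) (g : X → ℂ)
    (hf : Continuous f) (hg : Continuous g) : Continuous fun x => Ebess r (f x) (g x) := by
  unfold Ebess
  fun_prop

set_option maxHeartbeats 2000000 in
private lemma ker (r : ℝ) (j l : ℤ) (z : ℂ) :
    (∫ φ in (0:ℝ)..(2*Real.pi),
        Complex.exp (Complex.I * ((j : ℂ) - l) * φ) * Ebess r φ z) =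
      ((2*Real.pi : ℝ) : ℂ) * ∑' q : ℕ, gq r j l z q := by
  simp only [Ebess]
  have h2pi : (0:ℝ) ≤ 2*Real.pi := by positivity
  set Ca : ℂ := -(Complex.I * r * (starRingEnd ℂ) z) / 2 with hCa
  set Cb : ℂ := -(Complex.I * r * z) / 2 with hCb
  set T : ℕ × ℕ → ℝ → ℂ := fun p φ =>
    Complex.exp (Complex.I * ((j : ℂ) - l) * φ) *
      ((Ca * Complex.exp (Complex.I * φ)) ^ p.1 / p.1.factorial *
       ((Cb * Complex.exp (-(Complex.I * φ))) ^ p.2 / p.2.factorial)) with hT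
  -- pointwise expansion into a double series
  have hpt : ∀ φ : ℝ, (Complex.exp (Complex.I * ((j:ℂ)-l) * φ) *
      Complex.exp (-Complex.I *
        ((((r:ℂ) * Complex.exp (Complex.I*φ) * (starRingEnd ℂ) z).re : ℝ) : ℂ)))
      = ∑' p : ℕ × ℕ, T p φ := by
    intro φ
    set c : ℂ := (r:ℂ) * Complex.exp (Complex.I*φ) * (starRingEnd ℂ) z with hc
    have hconj : (starRingEnd ℂ) c = (r:ℂ) * Complex.exp (-(Complex.I*φ)) * z := by
      rw [hc]
      rw [map_mul, map_mul, ← Complex.exp_conj]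
      simp [Complex.conj_ofReal, Complex.conj_I]
    have hre : ((c.re : ℝ) : ℂ) = (c + (starRingEnd ℂ) c) / 2 := by
      rw [Complex.add_conj]; push_cast; ring
    have hE : -Complex.I * ((c.re : ℝ) : ℂ)
        = Ca * Complex.exp (Complex.I*φ) + Cb * Complex.exp (-(Complex.I*φ)) := by
      rw [hre, hconj, hCa, hCb, hc]; ring
    rw [hE, Complex.exp_add, exp_tsum (Ca * Complex.exp (Complex.I*φ)),
      exp_tsum (Cb * Complex.exp (-(Complex.I*φ))),
      tsum_mul_tsum_of_summable_norm (norm_summable_pow _) (norm_summable_pow _),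
      ← tsum_mul_left]
  -- norms of the summands
  have hnorm : ∀ (p : ℕ × ℕ) (φ : ℝ),
      ‖T p φ‖ = (‖Ca‖^p.1/p.1.factorial) * (‖Cb‖^p.2/p.2.factorial) := by
    intro p φ
    have e1 : ‖Complex.exp (Complex.I * ((j:ℂ)-l) * φ)‖ = 1 :=
      norm_exp_eq_one (by simp)
    have e2 : ‖Complex.exp (Complex.I * (φ:ℂ))‖ = 1 := norm_exp_eq_one (by simp)
    have e3 : ‖Complex.exp (-(Complex.I * (φ:ℂ)))‖ = 1 := norm_exp_eq_one (by simp)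
    simp only [hT, norm_mul, norm_div, norm_pow, e1, e2, e3, one_mul, mul_one,
      Complex.norm_natCast]
  -- integrability of each summand
  have hint : ∀ p : ℕ × ℕ, IntegrableOn (T p) (Set.Ioc (0:ℝ) (2*Real.pi)) volume := by
    intro p
    apply Continuous.integrableOn_Ioc
    simp only [hT]
    fun_prop
  -- summability of the integrals of norms
  have hsum : Summable fun p : ℕ × ℕ =>
      ∫ φ in Set.Ioc (0:ℝ) (2*Real.pi), ‖T p φ‖ := by
    have heq : (fun p : ℕ × ℕ => ∫ φ in Set.Ioc (0:ℝ) (2*Real.pi), ‖T p φ‖)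
        = fun p => (2*Real.pi) * ((‖Ca‖^p.1/p.1.factorial) * (‖Cb‖^p.2/p.2.factorial)) := by
      funext p
      simp_rw [hnorm p]
      rw [MeasureTheory.setIntegral_const, Real.volume_real_Ioc_of_le h2pi, smul_eq_mul, sub_zero]
    rw [heq]
    exact (((Real.summable_pow_div_factorial ‖Ca‖).mul_of_nonneg
      (Real.summable_pow_div_factorial ‖Cb‖) (fun n => by positivity)
      (fun n => by positivity))).mul_left _
  -- the value of each integral
  have hval : ∀ p : ℕ × ℕ, (∫ φ in Set.Ioc (0:ℝ) (2*Real.pi), T p φ) =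
      (Ca^p.1 * Cb^p.2 / ((p.1.factorial : ℂ) * (p.2.factorial : ℂ))) *
        (if ((j:ℤ) - l + p.1 - p.2) = 0 then ((2*Real.pi:ℝ):ℂ) else 0) := by
    rintro ⟨m, n⟩
    rw [← intervalIntegral.integral_of_le h2pi]
    have hptT : ∀ φ : ℝ, T (m, n) φ =
        (Ca^m * Cb^n / ((m.factorial : ℂ) * (n.factorial : ℂ))) *
          Complex.exp ((Complex.I * ((((j:ℤ) - l + m - n : ℤ)):ℂ)) * φ) := by
      intro φ
      have hcomb : Complex.exp (Complex.I*((j:ℂ)-l)*φ) *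
          (Complex.exp ((m:ℂ)*(Complex.I*φ)) * Complex.exp ((n:ℂ)*(-(Complex.I*φ))))
          = Complex.exp ((Complex.I * ((((j:ℤ) - l + m - n : ℤ)):ℂ)) * φ) := by
        rw [← Complex.exp_add, ← Complex.exp_add]
        congr 1
        push_cast
        ring
      simp only [hT]
      rw [mul_pow, mul_pow, ← Complex.exp_nat_mul, ← Complex.exp_nat_mul, ← hcomb]
      ring
    rw [intervalIntegral.integral_congr (fun φ _ => hptT φ),
      intervalIntegral.integral_const_mul, circleInt]
  -- assemble
  rw [intervalIntegral.integral_congr (fun φ _ => hpt φ),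
    intervalIntegral.integral_of_le h2pi,
    ← MeasureTheory.integral_tsum_of_summable_integral_norm (fun p => hint p) hsum]
  simp_rw [hval]
  -- reindex the double sum
  set V : ℕ × ℕ → ℂ := fun p =>
    (Ca^p.1 * Cb^p.2 / ((p.1.factorial : ℂ) * (p.2.factorial : ℂ))) *
      (if ((j:ℤ) - l + p.1 - p.2) = 0 then ((2*Real.pi:ℝ):ℂ) else 0) with hV
  have hVsum : Summable V := by
    apply Summable.of_norm_bounded
      (g := fun p : ℕ × ℕ => (2*Real.pi) * ((‖Ca‖^p.1/p.1.factorial) * (‖Cb‖^p.2/p.2.factorial)))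
      ((((Real.summable_pow_div_factorial ‖Ca‖).mul_of_nonneg
        (Real.summable_pow_div_factorial ‖Cb‖) (fun n => by positivity)
        (fun n => by positivity))).mul_left _)
    intro p
    rcases eq_or_ne ((j:ℤ) - l + p.1 - p.2) 0 with hc | hc
    · rw [hV]
      simp only [hc, if_pos]
      rw [norm_mul]
      simp only [norm_div, norm_mul, norm_pow, Complex.norm_natCast]
      rw [Complex.norm_real, Real.norm_of_nonneg h2pi]
      apply le_of_eq; ring
    · rw [hV]
      simp only [if_neg hc, mul_zero, norm_zero]
      positivity
  -- reorder the double sum and collapse the diagonal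
  have hswap : ∑' p : ℕ × ℕ, V p = ∑' p : ℕ × ℕ, V (p.2, p.1) :=
    ((Equiv.prodComm ℕ ℕ).tsum_eq V).symm
  have hVsum' : Summable fun p : ℕ × ℕ => V (p.2, p.1) :=
    ((Equiv.prodComm ℕ ℕ).summable_iff).2 hVsum
  have hfib : ∀ q : ℕ, Summable fun m : ℕ => V (m, q) := fun q => hVsum'.prod_factor q
  rw [hswap, hVsum'.tsum_prod' hfib]
  have hq : ∀ q : ℕ, (∑' m : ℕ, V (m, q)) = ((2*Real.pi:ℝ):ℂ) * gq r j l z q := by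
    intro q
    by_cases hcond : 0 ≤ (q:ℤ) + l - j
    · have ht : ((((q:ℤ)+l-j).toNat : ℤ)) = (q:ℤ)+l-j := Int.toNat_of_nonneg hcond
      rw [tsum_eq_single (((q:ℤ)+l-j).toNat) ?_]
      · simp only [hV]
        rw [if_pos (by omega)]
        simp only [gq]
        rw [if_pos hcond]
        set t : ℕ := ((q:ℤ)+l-j).toNat with htdef
        have e1 : Ca ^ t = (-Complex.I)^t * ((r:ℂ)/2)^t * ((starRingEnd ℂ) z)^t := by
          rw [hCa, show -(Complex.I * (r:ℂ) * (starRingEnd ℂ) z) / 2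
            = -Complex.I * ((r:ℂ)/2) * ((starRingEnd ℂ) z) by ring, mul_pow, mul_pow]
        have e2 : Cb ^ q = (-Complex.I)^q * ((r:ℂ)/2)^q * z^q := by
          rw [hCb, show -(Complex.I * (r:ℂ) * z) / 2 = -Complex.I * ((r:ℂ)/2) * z by ring,
            mul_pow, mul_pow]
        have e3 : (((r/2)^(t+q) / ((t.factorial:ℝ) * (q.factorial:ℝ)) : ℝ) : ℂ)
            = ((r:ℂ)/2)^t * ((r:ℂ)/2)^q / ((t.factorial:ℂ)*(q.factorial:ℂ)) := by
          push_cast [pow_add]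
          ring
        have e4 : (-Complex.I)^(t+q) = (-Complex.I)^t * (-Complex.I)^q := pow_add _ _ _
        rw [e1, e2, e3, e4]
        ring
      · intro m hm
        simp only [hV]
        rw [if_neg (by omega), mul_zero]
    · have hz : ∀ m : ℕ, V (m, q) = 0 := by
        intro m
        simp only [hV]
        rw [if_neg (by omega), mul_zero]
      rw [tsum_congr hz, tsum_zero]
      simp only [gq]
      rw [if_neg hcond, mul_zero]
  rw [tsum_congr hq]
  exact tsum_mul_left

private lemma coeff_id (j l : ℤ) (q : ℕ) (h : 0 ≤ (q:ℤ) + l - j) :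
    Complex.I ^ (l - j) * (-1 : ℂ) ^ ((q:ℤ)+l-j).toNat
      = (-Complex.I) ^ (((q:ℤ)+l-j).toNat + q) := by
  set t : ℕ := ((q:ℤ)+l-j).toNat with htdef
  have ht : (t:ℤ) = (q:ℤ) + l - j := Int.toNat_of_nonneg h
  have hlj : l - j = (t:ℤ) - (q:ℤ) := by omega
  rw [hlj, zpow_sub₀ Complex.I_ne_zero, zpow_natCast, zpow_natCast]
  have hinv : (Complex.I ^ q)⁻¹ = (-Complex.I)^q := by
    rw [← inv_pow, Complex.inv_I]
  have h2 : Complex.I ^ t * (-1:ℂ)^t = (-Complex.I)^t := by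
    rw [← mul_pow]; norm_num
  rw [div_eq_mul_inv, hinv, pow_add, ← h2]
  ring

private lemma cont_param {X : Type*} [TopologicalSpace X] [FirstCountableTopology X]
    [LocallyCompactSpace X] {f : X → ℂ → ℂ} (hf : Continuous (Function.uncurry f))
    {K : Set ℂ} (hK : IsCompact K) (h0 : ∀ x z, z ∉ K → f x z = 0) :
    Continuous fun x => ∫ z, f x z := by
  rw [continuous_iff_continuousAt]
  intro x₀
  obtain ⟨U, hUc, hUn⟩ := exists_compact_mem_nhds x₀
  obtain ⟨C, hC⟩ := (hUc.prod hK).exists_bound_of_continuousOn hf.continuousOn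
  set M := max C 0 with hM
  apply continuousAt_of_dominated (bound := K.indicator fun _ => M)
  · exact Filter.Eventually.of_forall fun x =>
      (hf.comp (Continuous.prodMk_right x)).aestronglyMeasurable
  · filter_upwards [hUn] with x hx
    refine Filter.Eventually.of_forall fun z => ?_
    by_cases hz : z ∈ K
    · rw [Set.indicator_of_mem hz]
      exact le_trans (hC (x, z) ⟨hx, hz⟩) (le_max_left _ _)
    · rw [Set.indicator_of_notMem hz, h0 x z hz, norm_zero]
  · exact (integrable_indicator_iff hK.measurableSet).2
      (integrableOn_const hK.measure_lt_top.ne)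
  · exact Filter.Eventually.of_forall fun z =>
      (hf.comp (continuous_id.prodMk continuous_const)).continuousAt

private lemma integrable_on_prod {f : ℝ × ℂ → ℂ} (hf : Continuous f) {K : Set ℂ}
    (hK : IsCompact K) (h0 : ∀ t z, z ∉ K → f (t, z) = 0) (a b : ℝ) :
    Integrable f ((volume.restrict (Set.Ioc a b)).prod volume) := by
  obtain ⟨C, hC⟩ := ((isCompact_Icc (a := a) (b := b)).prod hK).exists_bound_of_continuousOn
    hf.continuousOn
  set M := max C 0 with hM
  have hM0 : (0:ℝ) ≤ M := le_max_right _ _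
  have hg : Integrable ((Set.Ioc a b ×ˢ K).indicator fun _ => M)
      ((volume.restrict (Set.Ioc a b)).prod volume) := by
    refine (integrable_indicator_iff (measurableSet_Ioc.prod hK.measurableSet)).2 ?_
    refine integrableOn_const (lt_top_iff_ne_top.1 ?_)
    rw [Measure.prod_prod]
    exact ENNReal.mul_lt_top
      (lt_of_le_of_lt (Measure.restrict_apply_le _ _) measure_Ioc_lt_top)
      hK.measure_lt_top
  have hmeq : (volume.restrict (Set.Ioc a b)).prod (volume : Measure ℂ)
      = ((volume : Measure ℝ).prod volume).restrict (Set.Ioc a b ×ˢ Set.univ) := by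
    rw [← Measure.prod_restrict, Measure.restrict_univ]
  have hae : ∀ᵐ p ∂((volume.restrict (Set.Ioc a b)).prod (volume : Measure ℂ)),
      p.1 ∈ Set.Ioc a b := by
    rw [hmeq]
    filter_upwards [ae_restrict_mem (measurableSet_Ioc.prod MeasurableSet.univ)] with p hp
    exact hp.1
  refine hg.mono' hf.aestronglyMeasurable ?_
  filter_upwards [hae] with p hp
  by_cases hz : p.2 ∈ K
  · rw [Set.indicator_of_mem (Set.mk_mem_prod hp hz)]
    exact le_trans (hC p ⟨Set.Ioc_subset_Icc_self hp, hz⟩) (le_max_left _ _)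
  · have hf0 : f p = 0 := h0 p.1 p.2 hz
    rw [hf0, norm_zero]
    exact Set.indicator_nonneg (fun _ _ => hM0) p

private lemma integrable_rect {f : ℝ × ℝ → ℂ} (hf : Continuous f) (a b c d : ℝ) :
    Integrable f ((volume.restrict (Set.Ioc a b)).prod (volume.restrict (Set.Ioc c d))) := by
  obtain ⟨C, hC⟩ := ((isCompact_Icc (a := a) (b := b)).prod
    (isCompact_Icc (a := c) (b := d))).exists_bound_of_continuousOn hf.continuousOn
  set M := max C 0 with hM
  have hM0 : (0:ℝ) ≤ M := le_max_right _ _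
  have hfin1 : IsFiniteMeasure (volume.restrict (Set.Ioc a b)) :=
    ⟨by rw [Measure.restrict_apply_univ]; exact measure_Ioc_lt_top⟩
  have hfin2 : IsFiniteMeasure (volume.restrict (Set.Ioc c d)) :=
    ⟨by rw [Measure.restrict_apply_univ]; exact measure_Ioc_lt_top⟩
  have hmeq : (volume.restrict (Set.Ioc a b)).prod (volume.restrict (Set.Ioc c d))
      = ((volume : Measure ℝ).prod volume).restrict (Set.Ioc a b ×ˢ Set.Ioc c d) :=
    Measure.prod_restrict _ _
  have hae : ∀ᵐ p ∂((volume.restrict (Set.Ioc a b)).prod (volume.restrict (Set.Ioc c d))),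
      p ∈ Set.Ioc a b ×ˢ Set.Ioc c d := by
    rw [hmeq]
    exact ae_restrict_mem (measurableSet_Ioc.prod measurableSet_Ioc)
  refine (integrable_const M).mono' hf.aestronglyMeasurable ?_
  filter_upwards [hae] with p hp
  exact le_trans (hC p ⟨Set.Ioc_subset_Icc_self hp.1, Set.Ioc_subset_Icc_self hp.2⟩)
    (le_max_left _ _)

private lemma sub_periodic (g : ℝ → ℂ) (hg : Function.Periodic g (2*Real.pi)) (φ : ℝ) :
    (∫ θ in (0:ℝ)..(2*Real.pi), g (φ - θ)) = ∫ ψ in (0:ℝ)..(2*Real.pi), g ψ := by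
  rw [intervalIntegral.integral_comp_sub_left g φ]
  have h := hg.intervalIntegral_add_eq (φ - 2*Real.pi) 0
  simpa using h



private def Wfun (G : ℝ → ℂ → ℂ) (r : ℝ) (j l : ℤ) (θ φ : ℝ) (z : ℂ) : ℂ :=
  Complex.exp (Complex.I * (j:ℂ) * (θ:ℂ)) * Complex.exp (-Complex.I * (l:ℂ) * (φ:ℂ)) *
    (Ebess r φ z * G (φ - θ) z)

private def Qfun (G : ℝ → ℂ → ℂ) (r : ℝ) (j l : ℤ) (θ : ℝ) (z : ℂ) : ℂ :=
  ∫ φ in (0:ℝ)..(2*Real.pi), Wfun G r j l θ φ z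

end AuxBessel

set_option maxHeartbeats 4000000 in
/-- Lemma 4.1 (second part): the Bessel-function expansion of the matrix coefficients
`⟨π_r(F) χ_j, χ_l⟩` of the representation `π_r` of `G_1 = 𝕋 ⋉ ℍ_1`. -/
theorem Bcoef_eq_double_circle_integral
    (r : ℝ) (hr : 0 < r) (j l : ℤ) (G : ℝ → ℂ → ℂ)
    (hG : Continuous fun p : ℝ × ℂ => G p.1 p.2)
    (hper : ∀ θ z, G (θ + 2 * Real.pi) z = G θ z)
    (K : Set ℂ) (hK : IsCompact K) (hsupp : ∀ θ z, z ∉ K → G θ z = 0) :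
    Complex.I ^ (l - j) * Bcoef r (PhiCoef G j) j l =
      ((1 / (2 * Real.pi) ^ 2 : ℝ) : ℂ) *
        ∫ θ in (0 : ℝ)..(2 * Real.pi), ∫ φ in (0 : ℝ)..(2 * Real.pi),
          Complex.exp (Complex.I * (j : ℂ) * (θ : ℂ)) *
          Complex.exp (-Complex.I * (l : ℂ) * (φ : ℂ)) *
          Ghat G (φ - θ) ((r : ℂ) * Complex.exp (Complex.I * (φ : ℂ))) := by
  have h2pi : (0:ℝ) ≤ 2*Real.pi := by positivity
  have hpiC : ((Real.pi:ℂ)) ≠ 0 := Complex.ofReal_ne_zero.2 Real.pi_ne_zero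
  -- properties of Φ = PhiCoef G j
  have hΦc : Continuous (PhiCoef G j) := by
    unfold PhiCoef
    apply continuous_const.mul
    apply intervalIntegral.continuous_parametric_intervalIntegral_of_continuous'
      (f := fun (z : ℂ) (θ : ℝ) => Complex.exp (-Complex.I * (j:ℂ) * (θ:ℂ)) * G θ z)
    fun_prop
  have hΦ0 : ∀ z, z ∉ K → PhiCoef G j z = 0 := by
    intro z hz
    unfold PhiCoef
    rw [intervalIntegral.integral_congr (g := fun _ => (0:ℂ))
      (fun θ _ => by rw [hsupp θ z hz, mul_zero])]
    simp
  have hΦint : Integrable (PhiCoef G j) :=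
    hΦc.integrable_of_hasCompactSupport (HasCompactSupport.intro hK hΦ0)
  -- continuity of W
  have hWcont : ∀ {X : Type} [TopologicalSpace X] (f g : X → ℝ) (h : X → ℂ),
      Continuous f → Continuous g → Continuous h →
      Continuous fun x => Wfun G r j l (f x) (g x) (h x) := by
    intro X _ f g h hf hg hh
    unfold Wfun
    fun_prop
  -- Step A : rewrite the integrand via Wfun
  have hA : ∀ θ φ : ℝ,
      Complex.exp (Complex.I * (j:ℂ) * (θ:ℂ)) * Complex.exp (-Complex.I * (l:ℂ) * (φ:ℂ)) *
        Ghat G (φ - θ) ((r:ℂ) * Complex.exp (Complex.I * (φ:ℂ)))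
      = ∫ z : ℂ, Wfun G r j l θ φ z := by
    intro θ φ
    unfold Ghat
    rw [← MeasureTheory.integral_const_mul]
    apply MeasureTheory.integral_congr_ae
    refine Filter.Eventually.of_forall fun z => ?_
    unfold Wfun Ebess
    ring
  -- Step 1 : swap φ and z
  have step1 : ∀ θ : ℝ, (∫ φ in (0:ℝ)..(2*Real.pi), ∫ z : ℂ, Wfun G r j l θ φ z)
      = ∫ z : ℂ, Qfun G r j l θ z := by
    intro θ
    rw [intervalIntegral.integral_of_le h2pi]
    have hc : Continuous fun p : ℝ × ℂ => Wfun G r j l θ p.1 p.2 :=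
      hWcont _ _ _ continuous_const continuous_fst continuous_snd
    have h0 : ∀ (t : ℝ) (z : ℂ), z ∉ K →
        (fun p : ℝ × ℂ => Wfun G r j l θ p.1 p.2) (t, z) = 0 := by
      intro t z hz
      simp only [Wfun, hsupp _ _ hz, mul_zero]
    rw [MeasureTheory.integral_integral_swap
      (integrable_on_prod hc hK h0 0 (2*Real.pi))]
    unfold Qfun
    simp_rw [← intervalIntegral.integral_of_le h2pi]
  -- Step 2 : swap θ and z
  have hQc : Continuous fun p : ℝ × ℂ => Qfun G r j l p.1 p.2 := by
    unfold Qfun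
    apply intervalIntegral.continuous_parametric_intervalIntegral_of_continuous'
      (f := fun (p : ℝ × ℂ) (φ : ℝ) => Wfun G r j l p.1 φ p.2)
    exact hWcont (fun q : (ℝ × ℂ) × ℝ => q.1.1) (fun q => q.2) (fun q => q.1.2)
      (continuous_fst.comp continuous_fst) continuous_snd (continuous_snd.comp continuous_fst)
  have hQ0 : ∀ (t : ℝ) (z : ℂ), z ∉ K →
      (fun p : ℝ × ℂ => Qfun G r j l p.1 p.2) (t, z) = 0 := by
    intro t z hz
    simp only
    unfold Qfun
    rw [intervalIntegral.integral_congr (g := fun _ => (0:ℂ)) (fun φ _ => by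
      simp only [Wfun, hsupp _ _ hz, mul_zero])]
    simp
  have step2 : (∫ θ in (0:ℝ)..(2*Real.pi), ∫ z : ℂ, Qfun G r j l θ z)
      = ∫ z : ℂ, ∫ θ in (0:ℝ)..(2*Real.pi), Qfun G r j l θ z := by
    rw [intervalIntegral.integral_of_le h2pi]
    rw [MeasureTheory.integral_integral_swap
      (integrable_on_prod hQc hK hQ0 0 (2*Real.pi))]
    simp_rw [← intervalIntegral.integral_of_le h2pi]
  -- Step 5 : evaluate the inner double integral for fixed z
  have step5 : ∀ z : ℂ, (∫ θ in (0:ℝ)..(2*Real.pi), Qfun G r j l θ z)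
      = ((2*Real.pi:ℝ):ℂ)^2 * (PhiCoef G j z * ∑' q : ℕ, gq r j l z q) := by
    intro z
    have hWzc : Continuous fun p : ℝ × ℝ => Wfun G r j l p.1 p.2 z :=
      hWcont _ _ _ continuous_fst continuous_snd continuous_const
    unfold Qfun
    rw [intervalIntegral.integral_of_le h2pi]
    simp_rw [intervalIntegral.integral_of_le h2pi]
    rw [MeasureTheory.integral_integral_swap
      (integrable_rect hWzc 0 (2*Real.pi) 0 (2*Real.pi))]
    have hinner : ∀ φ : ℝ, (∫ θ in Set.Ioc (0:ℝ) (2*Real.pi), Wfun G r j l θ φ z)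
        = (((2*Real.pi:ℝ):ℂ) * PhiCoef G j z) *
            (Complex.exp (Complex.I * ((j:ℂ) - (l:ℂ)) * (φ:ℂ)) * Ebess r φ z) := by
      intro φ
      rw [← intervalIntegral.integral_of_le h2pi]
      have hrearr : ∀ θ : ℝ, Wfun G r j l θ φ z
          = (Complex.exp (-Complex.I * (l:ℂ) * (φ:ℂ)) * Ebess r φ z) *
              (Complex.exp (Complex.I * (j:ℂ) * (θ:ℂ)) * G (φ - θ) z) := by
        intro θ; unfold Wfun; ring
      rw [intervalIntegral.integral_congr (fun θ _ => hrearr θ),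
        intervalIntegral.integral_const_mul]
      have hgper : Function.Periodic
          (fun ψ : ℝ => Complex.exp (-Complex.I * (j:ℂ) * (ψ:ℂ)) * G ψ z) (2*Real.pi) := by
        intro ψ
        simp only
        rw [hper]
        congr 1
        rw [show -Complex.I * (j:ℂ) * ((ψ + 2*Real.pi : ℝ):ℂ)
            = -Complex.I * (j:ℂ) * (ψ:ℂ) + ((-j : ℤ):ℂ) * (2*(Real.pi:ℂ)*Complex.I) by
          push_cast; ring]
        rw [Complex.exp_add, Complex.exp_int_mul_two_pi_mul_I, mul_one]
      have hpt2 : ∀ θ : ℝ, Complex.exp (Complex.I * (j:ℂ) * (θ:ℂ)) * G (φ - θ) z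
          = Complex.exp (Complex.I * (j:ℂ) * (φ:ℂ)) *
              ((fun ψ : ℝ => Complex.exp (-Complex.I * (j:ℂ) * (ψ:ℂ)) * G ψ z) (φ - θ)) := by
        intro θ
        simp only
        rw [← mul_assoc, ← Complex.exp_add]
        congr 2
        push_cast; ring
      rw [intervalIntegral.integral_congr (fun θ _ => hpt2 θ),
        intervalIntegral.integral_const_mul,
        sub_periodic _ hgper φ]
      have hphi : (∫ ψ in (0:ℝ)..(2*Real.pi),
          Complex.exp (-Complex.I * (j:ℂ) * (ψ:ℂ)) * G ψ z)
          = ((2*Real.pi:ℝ):ℂ) * PhiCoef G j z := by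
        unfold PhiCoef
        push_cast
        field_simp
      rw [hphi]
      have hee : Complex.exp (-Complex.I * (l:ℂ) * (φ:ℂ)) *
          Complex.exp (Complex.I * (j:ℂ) * (φ:ℂ))
          = Complex.exp (Complex.I * ((j:ℂ) - (l:ℂ)) * (φ:ℂ)) := by
        rw [← Complex.exp_add]; congr 1; ring
      rw [← hee]
      ring
    rw [MeasureTheory.integral_congr_ae (Filter.Eventually.of_forall hinner)]
    rw [MeasureTheory.integral_const_mul, ← intervalIntegral.integral_of_le h2pi,
      ker r j l z]
    ring
  -- Step swap2 : exchange ∫ and ∑'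
  have hgqc : ∀ q : ℕ, Continuous fun z : ℂ => gq r j l z q := by
    intro q
    by_cases hcond : 0 ≤ (q:ℤ) + l - j
    · have : (fun z : ℂ => gq r j l z q) = fun z : ℂ =>
          (-Complex.I) ^ (((q:ℤ)+l-j).toNat + q) *
            (((r/2) ^ (((q:ℤ)+l-j).toNat + q) /
              (((((q:ℤ)+l-j).toNat.factorial : ℝ)) * (q.factorial : ℝ)) : ℝ) : ℂ) *
            ((starRingEnd ℂ) z ^ ((q:ℤ)+l-j).toNat * z ^ q) := by
        funext z; simp only [gq]; rw [if_pos hcond]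
      rw [this]
      exact continuous_const.mul ((Complex.continuous_conj.pow _).mul (continuous_pow q))
    · have : (fun z : ℂ => gq r j l z q) = fun _ : ℂ => (0:ℂ) := by
        funext z; simp only [gq]; rw [if_neg hcond]
      rw [this]
      exact continuous_const
  have hint2 : ∀ q : ℕ, Integrable (fun z : ℂ => PhiCoef G j z * gq r j l z q) := by
    intro q
    refine (hΦc.mul (hgqc q)).integrable_of_hasCompactSupport
      (HasCompactSupport.intro hK fun z hz => ?_)
    show PhiCoef G j z * gq r j l z q = 0
    rw [hΦ0 z hz, zero_mul]
  -- uniform bound for the summands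
  obtain ⟨R0, hR0⟩ := hK.isBounded.subset_closedBall (0 : ℂ)
  set R : ℝ := max R0 0 with hRdef
  have hRK : K ⊆ Metric.closedBall (0:ℂ) R :=
    hR0.trans (Metric.closedBall_subset_closedBall (le_max_left _ _))
  have hRpos : (0:ℝ) ≤ R := le_max_right _ _
  set B : ℝ := max (r * R / 2) 1 with hBdef
  have hB1 : (1:ℝ) ≤ B := le_max_right _ _
  set w : ℕ → ℝ := fun q =>
    if 0 ≤ (q:ℤ) + l - j then
      (r*R/2) ^ (((q:ℤ)+l-j).toNat + q) /
        ((((q:ℤ)+l-j).toNat.factorial : ℝ) * (q.factorial : ℝ))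
    else 0 with hwdef
  have hw0 : ∀ q, 0 ≤ w q := by
    intro q
    simp only [hwdef]
    split_ifs
    · positivity
    · exact le_refl 0
  have hgq_bound : ∀ (q : ℕ) (z : ℂ), z ∈ K → ‖gq r j l z q‖ ≤ w q := by
    intro q z hz
    have hznorm : ‖z‖ ≤ R := by
      have h := hRK hz
      rwa [Metric.mem_closedBall, dist_zero_right] at h
    simp only [gq, hwdef]
    split_ifs with hcond
    · set t := ((q:ℤ)+l-j).toNat with htdef
      simp only [norm_mul, norm_pow, norm_neg, Complex.norm_I, one_pow, one_mul,
        Complex.norm_real, RCLike.norm_conj, Real.norm_eq_abs]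
      rw [abs_of_nonneg (by positivity)]
      calc (r/2) ^ (t+q) / ((t.factorial:ℝ) * q.factorial) * (‖z‖^t * ‖z‖^q)
          ≤ (r/2) ^ (t+q) / ((t.factorial:ℝ) * q.factorial) * (R^t * R^q) := by
            apply mul_le_mul_of_nonneg_left
              (mul_le_mul (pow_le_pow_left₀ (norm_nonneg z) hznorm t)
                (pow_le_pow_left₀ (norm_nonneg z) hznorm q) (by positivity) (by positivity))
              (by positivity)
        _ = (r*R/2) ^ (t+q) / ((t.factorial:ℝ) * q.factorial) := by
            rw [← pow_add, div_mul_eq_mul_div, ← mul_pow,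
              show r/2*R = r*R/2 from by ring]
    · simp
  have hsum2 : Summable fun q : ℕ => ∫ z : ℂ, ‖PhiCoef G j z * gq r j l z q‖ := by
    have hbound : ∀ q : ℕ, (∫ z : ℂ, ‖PhiCoef G j z * gq r j l z q‖)
        ≤ w q * ∫ z : ℂ, ‖PhiCoef G j z‖ := by
      intro q
      rw [← MeasureTheory.integral_const_mul]
      apply MeasureTheory.integral_mono ((hint2 q).norm) (hΦint.norm.const_mul _)
      intro z
      by_cases hz : z ∈ K
      · simp only [norm_mul]
        rw [mul_comm]
        exact mul_le_mul_of_nonneg_right (hgq_bound q z hz) (norm_nonneg _)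
      · simp [hΦ0 z hz]
    have hwsum : Summable w := by
      refine Summable.of_nonneg_of_le hw0 ?_
        ((Real.summable_pow_div_factorial (B^2)).mul_left (B ^ (l-j).natAbs))
      intro q
      simp only [hwdef]
      split_ifs with hcond
      · set t := ((q:ℤ)+l-j).toNat with htdef
        have ht : (t:ℤ) = (q:ℤ) + l - j := Int.toNat_of_nonneg hcond
        have hexp : t + q ≤ 2*q + (l-j).natAbs := by omega
        have hone : (1:ℝ) ≤ (t.factorial:ℝ) := by
          exact_mod_cast Nat.one_le_iff_ne_zero.2 (Nat.factorial_ne_zero t)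
        calc (r*R/2) ^ (t+q) / ((t.factorial:ℝ) * q.factorial)
            ≤ B ^ (2*q + (l-j).natAbs) / (q.factorial : ℝ) := by
              apply div_le_div₀ (by positivity)
                (le_trans (pow_le_pow_left₀ (by positivity) (le_max_left _ _) _)
                  (pow_le_pow_right₀ hB1 hexp))
                (by exact_mod_cast Nat.factorial_pos q)
                (le_mul_of_one_le_left (by positivity) hone)
          _ = B ^ (l-j).natAbs * ((B^2)^q / q.factorial) := by
              rw [pow_add, pow_mul]
              ring
      · positivity
    exact Summable.of_nonneg_of_le
      (fun q => MeasureTheory.integral_nonneg fun z => norm_nonneg _) hbound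
      (hwsum.mul_right _)
  have hswap2 : (∫ z : ℂ, PhiCoef G j z * ∑' q : ℕ, gq r j l z q)
      = ∑' q : ℕ, ∫ z : ℂ, PhiCoef G j z * gq r j l z q := by
    rw [MeasureTheory.integral_congr_ae (Filter.Eventually.of_forall
      (fun z => (tsum_mul_left (a := PhiCoef G j z) (f := fun q => gq r j l z q)).symm))]
    exact (MeasureTheory.integral_tsum_of_summable_integral_norm hint2 hsum2).symm
  -- assemble
  have key : (∫ θ in (0:ℝ)..(2*Real.pi), ∫ φ in (0:ℝ)..(2*Real.pi),
      Complex.exp (Complex.I * (j:ℂ) * (θ:ℂ)) * Complex.exp (-Complex.I * (l:ℂ) * (φ:ℂ)) *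
        Ghat G (φ - θ) ((r:ℂ) * Complex.exp (Complex.I * (φ:ℂ))))
      = ((2*Real.pi:ℝ):ℂ)^2 * ∑' q : ℕ, ∫ z : ℂ, PhiCoef G j z * gq r j l z q := by
    simp_rw [hA, step1]
    rw [step2]
    rw [MeasureTheory.integral_congr_ae (Filter.Eventually.of_forall step5)]
    rw [MeasureTheory.integral_const_mul, hswap2]
  have hterm : ∀ q : ℕ, (∫ z : ℂ, PhiCoef G j z * gq r j l z q)
      = Complex.I ^ (l - j) *
        (if 0 ≤ (q:ℤ) + l - j then
          (-1 : ℂ) ^ ((q:ℤ) + l - j).toNat *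
            (((r / 2) ^ (2 * (q:ℤ) + l - j).toNat /
              ((Nat.factorial q) * (Nat.factorial ((q:ℤ) + l - j).toNat)) : ℝ) : ℂ) *
            ∫ z : ℂ, z ^ q * (starRingEnd ℂ z) ^ ((q:ℤ) + l - j).toNat * PhiCoef G j z
        else 0) := by
    intro q
    by_cases hcond : 0 ≤ (q:ℤ) + l - j
    · rw [if_pos hcond]
      have ht : ((((q:ℤ)+l-j).toNat : ℤ)) = (q:ℤ) + l - j := Int.toNat_of_nonneg hcond
      have htq : (2*(q:ℤ)+l-j).toNat = q + ((q:ℤ)+l-j).toNat := by omega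
      have hgqz : ∀ z : ℂ, PhiCoef G j z * gq r j l z q
          = ((-Complex.I) ^ (((q:ℤ)+l-j).toNat + q) *
              (((r/2) ^ (((q:ℤ)+l-j).toNat + q) /
                (((((q:ℤ)+l-j).toNat.factorial : ℝ)) * (q.factorial : ℝ)) : ℝ) : ℂ)) *
            (z ^ q * (starRingEnd ℂ) z ^ ((q:ℤ)+l-j).toNat * PhiCoef G j z) := by
        intro z; simp only [gq]; rw [if_pos hcond]; ring
      rw [MeasureTheory.integral_congr_ae (Filter.Eventually.of_forall hgqz),
        MeasureTheory.integral_const_mul, htq, ← coeff_id j l q hcond]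
      have hcr : (((r/2) ^ (((q:ℤ)+l-j).toNat + q) /
            (((((q:ℤ)+l-j).toNat.factorial : ℝ)) * (q.factorial : ℝ)) : ℝ) : ℂ)
          = (((r / 2) ^ (q + ((q:ℤ)+l-j).toNat) /
              ((Nat.factorial q) * (Nat.factorial ((q:ℤ)+l-j).toNat)) : ℝ) : ℂ) := by
        push_cast
        ring
      rw [hcr]
      ring
    · rw [if_neg hcond, mul_zero]
      have h0 : ∀ z : ℂ, PhiCoef G j z * gq r j l z q = 0 := by
        intro z; simp only [gq]; rw [if_neg hcond, mul_zero]
      rw [MeasureTheory.integral_congr_ae (Filter.Eventually.of_forall h0),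
        MeasureTheory.integral_zero]
  rw [key]
  have hsum_eq : (∑' q : ℕ, ∫ z : ℂ, PhiCoef G j z * gq r j l z q)
      = Complex.I ^ (l-j) * Bcoef r (PhiCoef G j) j l := by
    rw [tsum_congr hterm, tsum_mul_left]
    rfl
  rw [hsum_eq]
  rw [show ((1 / (2 * Real.pi) ^ 2 : ℝ) : ℂ) * (((2*Real.pi:ℝ):ℂ)^2 *
      (Complex.I ^ (l-j) * Bcoef r (PhiCoef G j) j l))
      = Complex.I ^ (l-j) * Bcoef r (PhiCoef G j) j l from by
    push_cast
    field_simp]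
end

section
/- Let G be a locally compact, second-countable topological group with left Haar measure μ_G, and let A be a locally compact, second-countable abelian topological group with Haar measure μ_A. Let F : G × A → ℂ be continuous with compact support. For each continuous character χ of A (i.e., each element of the Pontryagin dual of A, equipped with the compact-open topology), define F̂^A(χ) : G → ℂ by F̂^A(χ)(g) := ∫_A F(g,a)·χ(a) dμ_A(a). Then F̂^A(χ) belongs to L¹(G, μ_G) for every χ, and the map χ ↦ F̂^A(χ) from the Pontryagin dual of A to L¹(G, μ_G) is continuous. -/
open MeasureTheory

/-- The partial Fourier transform `F̂^A(χ)(g) = ∫_A F(g,a) χ(a) dμ_A(a)` of a compactly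
supported continuous function `F` on `G × A` is an `L¹(G)`-valued function of the character
`χ`, continuous on the Pontryagin dual of `A` (continuity expressed via neighborhoods and the
`L¹`-distance). -/
theorem partial_fourier_transform_L1_continuous
    (G A : Type*)
    [TopologicalSpace G] [Group G] [IsTopologicalGroup G]
    [LocallyCompactSpace G] [SecondCountableTopology G]
    [MeasurableSpace G] [BorelSpace G]
    [TopologicalSpace A] [CommGroup A] [IsTopologicalGroup A]
    [LocallyCompactSpace A] [SecondCountableTopology A]
    [MeasurableSpace A] [BorelSpace A]
    (μG : Measure G) [μG.IsHaarMeasure]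
    (μA : Measure A) [μA.IsHaarMeasure]
    (F : G × A → ℂ) (hF : Continuous F) (hFc : HasCompactSupport F) :
    (∀ χ : PontryaginDual A, Integrable (fun g => ∫ a, F (g, a) * (χ a : ℂ) ∂μA) μG) ∧
    ∀ χ₀ : PontryaginDual A, ∀ ε > (0 : ℝ), ∃ U ∈ nhds χ₀, ∀ χ ∈ U,
      (∫ g, ‖(∫ a, F (g, a) * (χ a : ℂ) ∂μA) -
          ∫ a, F (g, a) * (χ₀ a : ℂ) ∂μA‖ ∂μG) < ε := by
  classical
  set K := tsupport F with hKdef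
  have hK : IsCompact K := hFc
  set KG : Set G := closure (Prod.fst '' K) with hKGdef
  set KA : Set A := closure (Prod.snd '' K) with hKAdef
  have hKG : IsCompact KG := (hK.image continuous_fst).closure
  have hKA : IsCompact KA := (hK.image continuous_snd).closure
  have hKAmeas : MeasurableSet KA := isClosed_closure.measurableSet
  have hKGmeas : MeasurableSet KG := isClosed_closure.measurableSet
  obtain ⟨C, hC⟩ : ∃ C, ∀ x, ‖F x‖ ≤ C := hFc.exists_bound_of_continuous hF
  have hC0 : (0 : ℝ) ≤ C := le_trans (norm_nonneg (F 1)) (hC 1)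
  -- vanishing outside the projected supports
  have hvanA : ∀ g : G, ∀ a ∉ KA, F (g, a) = 0 := by
    intro g a ha
    by_contra h
    exact ha (subset_closure ⟨(g, a), subset_tsupport F h, rfl⟩)
  have hvanG : ∀ g ∉ KG, ∀ a : A, F (g, a) = 0 := by
    intro g hg a
    by_contra h
    exact hg (subset_closure ⟨(g, a), subset_tsupport F h, rfl⟩)
  -- inner integrability
  have hIntA : ∀ (c : A → ℂ), Continuous c → ∀ g : G,
      Integrable (fun a => F (g, a) * c a) μA := by
    intro c hc g
    refine Continuous.integrable_of_hasCompactSupport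
      ((hF.comp (Continuous.prodMk_right g)).mul hc) ?_
    refine HasCompactSupport.intro hKA fun a ha => ?_
    simp [hvanA g a ha]
  have hcontChar : ∀ χ : PontryaginDual A, Continuous fun a => (χ a : ℂ) :=
    fun χ => continuous_subtype_val.comp χ.continuous
  -- continuity of the inner integral in g, for a fixed bounded continuous multiplier
  have hcontG : ∀ (c : A → ℂ), Continuous c → (∀ a, ‖c a‖ ≤ 1) →
      Continuous fun g => ∫ a, F (g, a) * c a ∂μA := by
    intro c hc hc1
    refine continuous_of_dominated (bound := KA.indicator fun _ => C)
      (fun g => ((hF.comp (Continuous.prodMk_right g)).mul hc).aestronglyMeasurable)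
      (fun g => Filter.Eventually.of_forall fun a => ?_)
      ((integrable_indicator_iff hKAmeas).2 ?_)
      (Filter.Eventually.of_forall fun a =>
        (hF.comp (continuous_id.prodMk continuous_const)).mul continuous_const)
    · by_cases ha : a ∈ KA
      · rw [Set.indicator_of_mem ha]
        refine le_trans (norm_mul_le _ _) ?_
        calc ‖F (g, a)‖ * ‖c a‖ ≤ C * 1 :=
              mul_le_mul (hC _) (hc1 a) (norm_nonneg _) hC0
          _ = C := mul_one C
      · simp [Set.indicator_of_notMem ha, hvanA g a ha]
    · exact integrableOn_const hKA.measure_lt_top.ne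
  have hcontGχ : ∀ χ : PontryaginDual A,
      Continuous fun g => ∫ a, F (g, a) * (χ a : ℂ) ∂μA := by
    intro χ
    exact hcontG _ (hcontChar χ) fun a => (Circle.norm_coe (χ a)).le
  -- Part 1 : integrability in g
  have hIntG : ∀ χ : PontryaginDual A,
      Integrable (fun g => ∫ a, F (g, a) * (χ a : ℂ) ∂μA) μG := by
    intro χ
    refine Continuous.integrable_of_hasCompactSupport (hcontGχ χ) ?_
    refine HasCompactSupport.intro hKG fun g hg => ?_
    have : (fun a => F (g, a) * (χ a : ℂ)) = fun _ => 0 := by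
      funext a; simp [hvanG g hg a]
    simp [this]
  refine ⟨hIntG, ?_⟩
  intro χ₀ ε hε
  -- the restriction map to C(KA, ℂ) is continuous
  haveI : CompactSpace KA := isCompact_iff_compactSpace.mp hKA
  set Φ : PontryaginDual A → C(KA, ℂ) := fun χ =>
    (ContinuousMap.comp ⟨fun z : Circle => (z : ℂ), continuous_subtype_val⟩
      χ.toContinuousMap).restrict KA with hΦdef
  have hΦcont : Continuous Φ := by
    exact (ContinuousMap.continuous_restrict KA).comp
      ((ContinuousMap.continuous_postcomp _).comp
        (ContinuousMonoidHom.isInducing_toContinuousMap A Circle).continuous)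
  set a0 : ℝ := (μA KA).toReal with ha0
  set b0 : ℝ := (μG KG).toReal with hb0
  have ha0n : 0 ≤ a0 := ENNReal.toReal_nonneg
  have hb0n : 0 ≤ b0 := ENNReal.toReal_nonneg
  set δ : ℝ := ε / (2 * (C + 1) * (a0 + 1) * (b0 + 1)) with hδdef
  have hδpos : 0 < δ := by positivity
  refine ⟨Φ ⁻¹' Metric.ball (Φ χ₀) δ,
    hΦcont.continuousAt.preimage_mem_nhds (Metric.ball_mem_nhds _ hδpos), ?_⟩
  intro χ hχ
  have hχ' : ∀ a ∈ KA, ‖(χ a : ℂ) - (χ₀ a : ℂ)‖ ≤ δ := by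
    intro a ha
    have := ContinuousMap.dist_apply_le_dist (f := Φ χ) (g := Φ χ₀) ⟨a, ha⟩
    have h2 : dist (Φ χ) (Φ χ₀) < δ := by simpa [Metric.mem_ball] using hχ
    calc ‖(χ a : ℂ) - (χ₀ a : ℂ)‖ = dist ((Φ χ) ⟨a, ha⟩) ((Φ χ₀) ⟨a, ha⟩) := by
          rw [dist_eq_norm]
          rfl
      _ ≤ dist (Φ χ) (Φ χ₀) := this
      _ ≤ δ := h2.le
  -- rewrite difference of integrals
  have hdiff : ∀ g : G, (∫ a, F (g, a) * (χ a : ℂ) ∂μA) - ∫ a, F (g, a) * (χ₀ a : ℂ) ∂μA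
      = ∫ a, F (g, a) * ((χ a : ℂ) - (χ₀ a : ℂ)) ∂μA := by
    intro g
    rw [← integral_sub (hIntA _ (hcontChar χ) g) (hIntA _ (hcontChar χ₀) g)]
    congr 1; funext a; ring
  -- pointwise bound of the inner difference
  have hbound : ∀ g : G,
      ‖(∫ a, F (g, a) * (χ a : ℂ) ∂μA) - ∫ a, F (g, a) * (χ₀ a : ℂ) ∂μA‖ ≤ C * δ * a0 := by
    intro g
    rw [hdiff g]
    have : ‖∫ a, F (g, a) * ((χ a : ℂ) - (χ₀ a : ℂ)) ∂μA‖
        ≤ ∫ a, KA.indicator (fun _ => C * δ) a ∂μA := by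
      refine norm_integral_le_of_norm_le
        ((integrable_indicator_iff hKAmeas).2
          (integrableOn_const hKA.measure_lt_top.ne))
        (Filter.Eventually.of_forall fun a => ?_)
      by_cases ha : a ∈ KA
      · rw [Set.indicator_of_mem ha]
        calc ‖F (g, a) * ((χ a : ℂ) - (χ₀ a : ℂ))‖ = ‖F (g, a)‖ * ‖(χ a : ℂ) - (χ₀ a : ℂ)‖ :=
              norm_mul _ _
          _ ≤ C * δ := mul_le_mul (hC _) (hχ' a ha) (norm_nonneg _) hC0
      · simp [Set.indicator_of_notMem ha, hvanA g a ha]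
    refine this.trans ?_
    rw [integral_indicator_const _ hKAmeas]
    simp [ha0, smul_eq_mul, mul_comm, Measure.real]
  -- the integrand is dominated by an indicator on KG
  have hdom : ∀ g : G,
      ‖(∫ a, F (g, a) * (χ a : ℂ) ∂μA) - ∫ a, F (g, a) * (χ₀ a : ℂ) ∂μA‖
        ≤ KG.indicator (fun _ => C * δ * a0) g := by
    intro g
    by_cases hg : g ∈ KG
    · rw [Set.indicator_of_mem hg]; exact hbound g
    · rw [Set.indicator_of_notMem hg]
      have h1 : (fun a => F (g, a) * (χ a : ℂ)) = fun _ => 0 := by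
        funext a; simp [hvanG g hg a]
      have h2 : (fun a => F (g, a) * (χ₀ a : ℂ)) = fun _ => 0 := by
        funext a; simp [hvanG g hg a]
      simp [h1, h2]
  have hintdom : Integrable (KG.indicator (fun _ => C * δ * a0)) μG :=
    (integrable_indicator_iff hKGmeas).2 (integrableOn_const hKG.measure_lt_top.ne)
  have key : (∫ g, ‖(∫ a, F (g, a) * (χ a : ℂ) ∂μA) - ∫ a, F (g, a) * (χ₀ a : ℂ) ∂μA‖ ∂μG)
      ≤ C * δ * a0 * b0 := by
    have := integral_mono ((hIntG χ).sub (hIntG χ₀)).norm hintdom hdom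
    refine this.trans ?_
    rw [integral_indicator_const _ hKGmeas]
    simp [hb0, smul_eq_mul, mul_comm, Measure.real]
  have hfin : C * δ * a0 * b0 < ε := by
    have hmono : C * a0 * b0 ≤ (C + 1) * (a0 + 1) * (b0 + 1) := by
      nlinarith [mul_nonneg hC0 ha0n, mul_nonneg hC0 hb0n, mul_nonneg ha0n hb0n]
    have h1 : C * δ * a0 * b0 ≤ (C + 1) * (a0 + 1) * (b0 + 1) * δ := by
      calc C * δ * a0 * b0 = (C * a0 * b0) * δ := by ring
        _ ≤ (C + 1) * (a0 + 1) * (b0 + 1) * δ := mul_le_mul_of_nonneg_right hmono hδpos.le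
    have h2 : (C + 1) * (a0 + 1) * (b0 + 1) * δ = ε / 2 := by
      rw [hδdef]; field_simp
    have h3 : ε / 2 < ε := by linarith
    linarith
  calc (∫ g, ‖(∫ a, F (g, a) * (χ a : ℂ) ∂μA) -
          ∫ a, F (g, a) * (χ₀ a : ℂ) ∂μA‖ ∂μG)
      = ∫ g, ‖(∫ a, F (g, a) * (χ a : ℂ) ∂μA) - ∫ a, F (g, a) * (χ₀ a : ℂ) ∂μA‖ ∂μG := by
        rfl
    _ ≤ C * δ * a0 * b0 := key
    _ < ε := hfin
end
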